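/- Let G be a Garside group of finite type with positive monoid P and Garside element Δ. For every x ∈ G one has inf(𝔰(x)) ≥ inf(x), sup(𝔰(x)) ≤ sup(x), and ℓ(𝔰(x)) ≤ ℓ(x), where 𝔰 denotes cyclic sliding. -/

import Mathlib

namespace GarsidePaper

/-- A Garside structure of finite type on a group `G`: a positive submonoid `P` with
`P ∩ P⁻¹ = {1}`, a Garside element `Δ ∈ P`, the prefix order `a ≼ b ↔ a⁻¹b ∈ P`
a lattice order (with meet `wedge` and join `vee`), the simple elements `[1,Δ]`
generating `G` and being finite, `Δ⁻¹PΔ = P`, a finite norm on positive elements,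
and the infimum and supremum functions `inf`, `sup` characterised by
`Δ^(inf x) ≼ x ≼ Δ^(sup x)` with `inf x` maximal and `sup x` minimal. -/
structure Garside (G : Type*) [Group G] where
  P : Submonoid G
  Δ : G
  purity : ∀ a : G, a ∈ P → a⁻¹ ∈ P → a = 1
  delta_mem : Δ ∈ P
  wedge : G → G → G
  vee : G → G → G
  wedge_le_left : ∀ a b : G, (wedge a b)⁻¹ * a ∈ P
  wedge_le_right : ∀ a b : G, (wedge a b)⁻¹ * b ∈ P
  le_wedge : ∀ a b c : G, c⁻¹ * a ∈ P → c⁻¹ * b ∈ P → c⁻¹ * wedge a b ∈ P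
  le_vee_left : ∀ a b : G, a⁻¹ * vee a b ∈ P
  le_vee_right : ∀ a b : G, b⁻¹ * vee a b ∈ P
  vee_le : ∀ a b c : G, a⁻¹ * c ∈ P → b⁻¹ * c ∈ P → (vee a b)⁻¹ * c ∈ P
  simples_generate : Subgroup.closure {a : G | a ∈ P ∧ a⁻¹ * Δ ∈ P} = (⊤ : Subgroup G)
  conj_pos : ∀ a : G, a ∈ P → Δ⁻¹ * a * Δ ∈ P
  norm : G → ℕ
  norm_exists : ∀ x : G, x ∈ P → x ≠ 1 →
    ∃ l : List G, (∀ s ∈ l, s ∈ P ∧ s ≠ 1) ∧ l.prod = x ∧ l.length = norm x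
  norm_max : ∀ x : G, x ∈ P → x ≠ 1 →
    ∀ l : List G, (∀ s ∈ l, s ∈ P ∧ s ≠ 1) → l.prod = x → l.length ≤ norm x
  simples_finite : Set.Finite {a : G | a ∈ P ∧ a⁻¹ * Δ ∈ P}
  inf : G → ℤ
  sup : G → ℤ
  inf_le : ∀ x : G, (Δ ^ inf x)⁻¹ * x ∈ P
  inf_max : ∀ (x : G) (p : ℤ), (Δ ^ p)⁻¹ * x ∈ P → p ≤ inf x
  le_sup : ∀ x : G, x⁻¹ * Δ ^ sup x ∈ P
  sup_min : ∀ (x : G) (q : ℤ), x⁻¹ * Δ ^ q ∈ P → sup x ≤ q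

namespace Garside

variable {G : Type*} [Group G]

/-- The prefix order `a ≼ b`. -/
def le (S : Garside G) (a b : G) : Prop := a⁻¹ * b ∈ S.P

/-- The canonical length `ℓ(x) = sup(x) - inf(x)`. -/
def len (S : Garside G) (x : G) : ℤ := S.sup x - S.inf x

/-- The initial factor `ι(x) = (x Δ^(-inf x)) ∧ Δ`. -/
def iota (S : Garside G) (x : G) : G := S.wedge (x * S.Δ ^ (-S.inf x)) S.Δ

/-- The preferred prefix `𝔭(x) = ι(x) ∧ ι(x⁻¹)`. -/
def pp (S : Garside G) (x : G) : G := S.wedge (S.iota x) (S.iota x⁻¹)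

/-- Cyclic sliding `𝔰(x) = 𝔭(x)⁻¹ x 𝔭(x)`. -/
def sl (S : Garside G) (x : G) : G := (S.pp x)⁻¹ * x * S.pp x

/-- The final factor `φ(x) = (Δ^(sup x - 1) ∧ x)⁻¹ x`. -/
def phi (S : Garside G) (x : G) : G := (S.wedge (S.Δ ^ (S.sup x - 1)) x)⁻¹ * x

/-- Conjugation by `Δ`: `τ(x) = Δ⁻¹ x Δ`. -/
def tau (S : Garside G) (x : G) : G := S.Δ⁻¹ * x * S.Δ

/-- Cycling `c(x) = ι(x)⁻¹ x ι(x)`. -/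
def cyc (S : Garside G) (x : G) : G := (S.iota x)⁻¹ * x * S.iota x

/-- Decycling `d(x) = φ(x) x φ(x)⁻¹`. -/
def dec (S : Garside G) (x : G) : G := S.phi x * x * (S.phi x)⁻¹

/-- The transport `α^{(1)} = 𝔭(x)⁻¹ α 𝔭(x^α)` of `α` at `x`. -/
def transport (S : Garside G) (x α : G) : G := (S.pp x)⁻¹ * α * S.pp (α⁻¹ * x * α)

/-- The iterated transport: `itTransport x i α = α^{(i)}`, the transport of `α^{(i-1)}`
at `𝔰^{i-1}(x)`, with `α^{(0)} = α`. -/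
def itTransport (S : Garside G) (x : G) : ℕ → G → G
  | 0, α => α
  | i + 1, α => S.transport ((S.sl)^[i] x) (S.itTransport x i α)

/-- `𝔓_i(x) = 𝔭(x) 𝔭(𝔰(x)) ⋯ 𝔭(𝔰^{i-1}(x))`, with `𝔓₀(x) = 1`. -/
def PP (S : Garside G) (x : G) : ℕ → G
  | 0 => 1
  | i + 1 => S.PP x i * S.pp ((S.sl)^[i] x)

/-- The summit set `SS(x)`. -/
def SS (S : Garside G) (x : G) : Set G :=
  {y | IsConj x y ∧ ∀ z : G, IsConj x z → S.inf z ≤ S.inf y}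

/-- The super summit set `SSS(x)`. -/
def SSS (S : Garside G) (x : G) : Set G :=
  {y | IsConj x y ∧ (∀ z : G, IsConj x z → S.inf z ≤ S.inf y) ∧
       (∀ z : G, IsConj x z → S.sup y ≤ S.sup z)}

/-- The ultra summit set `USS(x)`. -/
def USS (S : Garside G) (x : G) : Set G :=
  {y | y ∈ S.SSS x ∧ ∃ m : ℕ, 1 ≤ m ∧ (S.cyc)^[m] y = y}

/-- The reduced super summit set `RSSS(x)`. -/
def RSSS (S : Garside G) (x : G) : Set G :=
  {y | IsConj x y ∧ (∃ m : ℕ, 1 ≤ m ∧ (S.cyc)^[m] y = y) ∧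
       (∃ n : ℕ, 1 ≤ n ∧ (S.dec)^[n] y = y)}

/-- The set of sliding circuits `SC(x)`. -/
def SC (S : Garside G) (x : G) : Set G :=
  {y | IsConj x y ∧ ∃ m : ℕ, 1 ≤ m ∧ (S.sl)^[m] y = y}

variable (S : Garside G)

/-- Simple elements. -/
def Smp (a : G) : Prop := a ∈ S.P ∧ a⁻¹ * S.Δ ∈ S.P

variable {S}

lemma smp_mem {a : G} (h : S.Smp a) : a ∈ S.P := h.1

lemma le_antisymm' {a b : G} (h1 : a⁻¹ * b ∈ S.P) (h2 : b⁻¹ * a ∈ S.P) : a = b := by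
  have := S.purity (a⁻¹ * b) h1 (by simpa using h2)
  have : a * (a⁻¹ * b) = a * 1 := by rw [this]
  exact (by simpa using this : b = a).symm

lemma smp_one : S.Smp 1 := ⟨S.P.one_mem, by simpa using S.delta_mem⟩

lemma smp_delta : S.Smp S.Δ := ⟨S.delta_mem, by simpa using S.P.one_mem⟩

lemma tau_smp {a : G} (h : S.Smp a) : S.Smp (S.Δ⁻¹ * a * S.Δ) := by
  refine ⟨S.conj_pos a h.1, ?_⟩
  have := S.conj_pos _ h.2
  have e : S.Δ⁻¹ * (a⁻¹ * S.Δ) * S.Δ = (S.Δ⁻¹ * a * S.Δ)⁻¹ * S.Δ := by group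
  rwa [e] at this

lemma tau_inv_smp {a : G} (h : S.Smp a) : S.Smp (S.Δ * a * S.Δ⁻¹) := by
  set s : Set G := {a : G | a ∈ S.P ∧ a⁻¹ * S.Δ ∈ S.P} with hs
  have hmaps : Set.MapsTo (fun a => S.Δ⁻¹ * a * S.Δ) s s := fun a ha => tau_smp ha
  have hinj : Set.InjOn (fun a => S.Δ⁻¹ * a * S.Δ) s := by
    intro a _ b _ hab
    simpa using mul_left_cancel (mul_right_cancel hab)
  have hbij := (S.simples_finite.injOn_iff_bijOn_of_mapsTo hmaps).mp hinj
  obtain ⟨b, hb, hab⟩ := hbij.surjOn h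
  have : b = S.Δ * a * S.Δ⁻¹ := by
    have : S.Δ⁻¹ * b * S.Δ = a := hab
    rw [← this]; group
  rw [← this]; exact hb

/-- products of simples -/
def InM (S : Garside G) (x : G) : Prop :=
  ∃ l : List G, (∀ s ∈ l, S.Smp s) ∧ l.prod = x

lemma InM_one : S.InM 1 := ⟨[], by simp⟩

lemma InM_smp {a : G} (h : S.Smp a) : S.InM a := ⟨[a], by simp [h]⟩

lemma InM_mul {a b : G} (ha : S.InM a) (hb : S.InM b) : S.InM (a * b) := by
  obtain ⟨l, hl, hpl⟩ := ha; obtain ⟨m, hm, hpm⟩ := hb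
  exact ⟨l ++ m, by
    constructor
    · intro s hs; rcases List.mem_append.mp hs with h | h
      exacts [hl s h, hm s h]
    · simp [hpl, hpm]⟩

lemma InM_pos {a : G} (ha : S.InM a) : a ∈ S.P := by
  obtain ⟨l, hl, hpl⟩ := ha
  subst hpl
  induction l with
  | nil => simpa using S.P.one_mem
  | cons s t ih =>
    simp only [List.prod_cons]
    exact S.P.mul_mem (hl s (by simp)).1 (ih fun a ha => hl a (List.mem_cons_of_mem _ ha))

lemma vee_comm (a b : G) : S.vee a b = S.vee b a :=
  le_antisymm' (S.vee_le a b _ (S.le_vee_right b a) (S.le_vee_left b a))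
    (S.vee_le b a _ (S.le_vee_right a b) (S.le_vee_left a b))

lemma vee_one_left {a : G} (ha : a ∈ S.P) : S.vee 1 a = a :=
  le_antisymm' (S.vee_le 1 a a (by simpa using ha) (by simpa using S.P.one_mem))
    (S.le_vee_right 1 a)

lemma vee_one_right {a : G} (ha : a ∈ S.P) : S.vee a 1 = a := by
  rw [vee_comm]; exact vee_one_left ha

lemma comp_smp {s t : G} (hs : S.Smp s) (ht : S.Smp t) : S.Smp (s⁻¹ * S.vee s t) := by
  refine ⟨S.le_vee_left s t, ?_⟩
  have h1 : (S.vee s t)⁻¹ * S.Δ ∈ S.P := S.vee_le s t S.Δ hs.2 ht.2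
  have h2 : (s⁻¹ * S.Δ)⁻¹ * S.Δ ∈ S.P := by
    have := S.conj_pos s hs.1
    have e : S.Δ⁻¹ * s * S.Δ = (s⁻¹ * S.Δ)⁻¹ * S.Δ := by group
    rwa [e] at this
  -- (s⁻¹ * vee s t)⁻¹ * Δ = ((vee s t)⁻¹ * Δ) * (Δ⁻¹ * s * Δ)
  have e : (s⁻¹ * S.vee s t)⁻¹ * S.Δ = ((S.vee s t)⁻¹ * S.Δ) * (S.Δ⁻¹ * s * S.Δ) := by group
  rw [e]; exact S.P.mul_mem h1 (S.conj_pos s hs.1)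

lemma comp_smp' {s t : G} (hs : S.Smp s) (ht : S.Smp t) : S.Smp (t⁻¹ * S.vee s t) := by
  rw [vee_comm]; exact comp_smp ht hs


lemma vee_cons (s t w : G) (hw : w ∈ S.P) :
    S.vee s (t * w) = t * S.vee (t⁻¹ * S.vee s t) w := by
  set t₁ := t⁻¹ * S.vee s t with ht₁
  set A := S.vee s (t * w) with hA
  set B := t * S.vee t₁ w with hB
  have hAB : A⁻¹ * B ∈ S.P := by
    refine S.vee_le s (t * w) B ?_ ?_
    · -- s⁻¹ * B = (s⁻¹ * (s ∨ t)) * (t₁⁻¹ * (t₁ ∨ w))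
      have e : s⁻¹ * B = (s⁻¹ * S.vee s t) * (t₁⁻¹ * S.vee t₁ w) := by
        rw [hB, ht₁]; group
      rw [e]; exact S.P.mul_mem (S.le_vee_left s t) (S.le_vee_left t₁ w)
    · have e : (t * w)⁻¹ * B = w⁻¹ * S.vee t₁ w := by rw [hB]; group
      rw [e]; exact S.le_vee_right t₁ w
  have hBA : B⁻¹ * A ∈ S.P := by
    have h : (S.vee t₁ w)⁻¹ * (t⁻¹ * A) ∈ S.P := by
      refine S.vee_le t₁ w (t⁻¹ * A) ?_ ?_
      · -- t₁⁻¹ * (t⁻¹ * A) = (s ∨ t)⁻¹ * A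
        have e : t₁⁻¹ * (t⁻¹ * A) = (S.vee s t)⁻¹ * A := by rw [ht₁]; group
        rw [e]
        refine S.vee_le s t A (S.le_vee_left s (t * w)) ?_
        have e2 : t⁻¹ * A = w * ((t * w)⁻¹ * A) := by group
        rw [e2]
        exact S.P.mul_mem hw (S.le_vee_right s (t * w))
      · have e : w⁻¹ * (t⁻¹ * A) = (t * w)⁻¹ * A := by group
        rw [e]; exact S.le_vee_right s (t * w)
    have e : B⁻¹ * A = (S.vee t₁ w)⁻¹ * (t⁻¹ * A) := by rw [hB]; group
    rw [e]; exact h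
  exact le_antisymm' hAB hBA

lemma lemA : ∀ l : List G, (∀ t ∈ l, S.Smp t) → ∀ s : G, S.Smp s →
    S.InM (s⁻¹ * S.vee s l.prod) ∧ S.Smp (l.prod⁻¹ * S.vee s l.prod) := by
  intro l
  induction l with
  | nil =>
    intro _ s hs
    simp only [List.prod_nil]
    rw [vee_one_right hs.1]
    constructor
    · simpa using InM_one
    · simpa using hs
  | cons t l' ih =>
    intro hl s hs
    have ht : S.Smp t := hl t (by simp)
    have hl' : ∀ a ∈ l', S.Smp a := fun a ha => hl a (List.mem_cons_of_mem _ ha)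
    have hw : l'.prod ∈ S.P := InM_pos ⟨l', hl', rfl⟩
    set t₁ := t⁻¹ * S.vee s t with ht₁
    have ht₁s : S.Smp t₁ := comp_smp' hs ht
    obtain ⟨ih1, ih2⟩ := ih hl' t₁ ht₁s
    simp only [List.prod_cons]
    rw [vee_cons s t l'.prod hw]
    constructor
    · have e : s⁻¹ * (t * S.vee t₁ l'.prod)
          = (s⁻¹ * S.vee s t) * (t₁⁻¹ * S.vee t₁ l'.prod) := by rw [ht₁]; group
      rw [e]
      exact InM_mul (InM_smp (comp_smp hs ht)) ih1
    · have e : (t * l'.prod)⁻¹ * (t * S.vee t₁ l'.prod)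
          = l'.prod⁻¹ * S.vee t₁ l'.prod := by group
      rw [e]; exact ih2

lemma lemA1 {s v : G} (hs : S.Smp s) (hv : S.InM v) : S.InM (s⁻¹ * S.vee s v) := by
  obtain ⟨l, hl, rfl⟩ := hv; exact (lemA l hl s hs).1

lemma vee_cons' (s u v : G) (hu : u ∈ S.P) :
    S.vee (s * u) v = s * S.vee u (s⁻¹ * S.vee s v) := by
  set c₀ := s⁻¹ * S.vee s v with hc₀
  set A := S.vee (s * u) v with hA
  set B := s * S.vee u c₀ with hB
  have hAB : A⁻¹ * B ∈ S.P := by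
    refine S.vee_le (s * u) v B ?_ ?_
    · have e : (s * u)⁻¹ * B = u⁻¹ * S.vee u c₀ := by rw [hB]; group
      rw [e]; exact S.le_vee_left u c₀
    · have e : v⁻¹ * B = (v⁻¹ * S.vee s v) * (c₀⁻¹ * S.vee u c₀) := by
        rw [hB, hc₀]; group
      rw [e]; exact S.P.mul_mem (S.le_vee_right s v) (S.le_vee_right u c₀)
  have hBA : B⁻¹ * A ∈ S.P := by
    have h : (S.vee u c₀)⁻¹ * (s⁻¹ * A) ∈ S.P := by
      refine S.vee_le u c₀ (s⁻¹ * A) ?_ ?_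
      · have e : u⁻¹ * (s⁻¹ * A) = (s * u)⁻¹ * A := by group
        rw [e]; exact S.le_vee_left (s * u) v
      · have e : c₀⁻¹ * (s⁻¹ * A) = (S.vee s v)⁻¹ * A := by rw [hc₀]; group
        rw [e]
        refine S.vee_le s v A ?_ (S.le_vee_right (s * u) v)
        have e2 : s⁻¹ * A = u * ((s * u)⁻¹ * A) := by group
        rw [e2]; exact S.P.mul_mem hu (S.le_vee_left (s * u) v)
    have e : B⁻¹ * A = (S.vee u c₀)⁻¹ * (s⁻¹ * A) := by rw [hB]; group
    rw [e]; exact h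
  exact le_antisymm' hAB hBA

lemma joinM : ∀ l : List G, (∀ t ∈ l, S.Smp t) → ∀ v : G, S.InM v →
    S.InM (l.prod⁻¹ * S.vee l.prod v) := by
  intro l
  induction l with
  | nil =>
    intro _ v hv
    simp only [List.prod_nil]
    rw [vee_one_left (InM_pos hv)]
    simpa using hv
  | cons s l' ih =>
    intro hl v hv
    have hs : S.Smp s := hl s (by simp)
    have hl' : ∀ a ∈ l', S.Smp a := fun a ha => hl a (List.mem_cons_of_mem _ ha)
    have hu : l'.prod ∈ S.P := InM_pos ⟨l', hl', rfl⟩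
    simp only [List.prod_cons]
    rw [vee_cons' s l'.prod v hu]
    have e : (s * l'.prod)⁻¹ * (s * S.vee l'.prod (s⁻¹ * S.vee s v))
        = l'.prod⁻¹ * S.vee l'.prod (s⁻¹ * S.vee s v) := by group
    rw [e]
    exact ih hl' _ (lemA1 hs hv)

lemma joinM' {u v : G} (hu : S.InM u) (hv : S.InM v) : S.InM (u⁻¹ * S.vee u v) := by
  obtain ⟨l, hl, rfl⟩ := hu; exact joinM l hl v hv

lemma divM : ∀ l : List G, (∀ t ∈ l, S.Smp t) → ∀ s : G, S.Smp s →
    s⁻¹ * l.prod ∈ S.P → S.InM (s⁻¹ * l.prod) := by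
  intro l
  induction l with
  | nil =>
    intro _ s hs h
    simp only [List.prod_nil] at *
    have hs1 : s = 1 := S.purity s hs.1 (by simpa using h)
    rw [hs1]; simpa using InM_one
  | cons t l' ih =>
    intro hl s hs h
    have ht : S.Smp t := hl t (by simp)
    have hl' : ∀ a ∈ l', S.Smp a := fun a ha => hl a (List.mem_cons_of_mem _ ha)
    have hw : l'.prod ∈ S.P := InM_pos ⟨l', hl', rfl⟩
    simp only [List.prod_cons] at *
    set t₁ := t⁻¹ * S.vee s t with ht₁
    have ht₁s : S.Smp t₁ := comp_smp' hs ht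
    have hst : (S.vee s t)⁻¹ * (t * l'.prod) ∈ S.P := by
      refine S.vee_le s t (t * l'.prod) h ?_
      have e : t⁻¹ * (t * l'.prod) = l'.prod := by group
      rw [e]; exact hw
    have ht₁w : t₁⁻¹ * l'.prod ∈ S.P := by
      have e : t₁⁻¹ * l'.prod = (S.vee s t)⁻¹ * (t * l'.prod) := by rw [ht₁]; group
      rw [e]; exact hst
    have ihw := ih hl' t₁ ht₁s ht₁w
    have e : s⁻¹ * (t * l'.prod) = (s⁻¹ * S.vee s t) * (t₁⁻¹ * l'.prod) := by
      rw [ht₁]; group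
    rw [e]
    exact InM_mul (InM_smp (comp_smp hs ht)) ihw

lemma divM' {s v : G} (hv : S.InM v) (hs : S.Smp s) (h : s⁻¹ * v ∈ S.P) :
    S.InM (s⁻¹ * v) := by
  obtain ⟨l, hl, rfl⟩ := hv; exact divM l hl s hs h

lemma taun_smp : ∀ n : ℕ, ∀ {a : G}, S.Smp a → S.Smp ((S.Δ ^ n)⁻¹ * a * S.Δ ^ n) := by
  intro n
  induction n with
  | zero => intro a ha; simpa using ha
  | succ n ih =>
    intro a ha
    have := tau_smp (ih ha)
    have e : S.Δ⁻¹ * ((S.Δ ^ n)⁻¹ * a * S.Δ ^ n) * S.Δ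
        = (S.Δ ^ (n + 1))⁻¹ * a * S.Δ ^ (n + 1) := by
      rw [pow_succ]; group
    rwa [e] at this

lemma smp_comp_delta {s : G} (hs : S.Smp s) : S.Smp (s⁻¹ * S.Δ) := by
  refine ⟨hs.2, ?_⟩
  have := S.conj_pos s hs.1
  have e : S.Δ⁻¹ * s * S.Δ = (s⁻¹ * S.Δ)⁻¹ * S.Δ := by group
  rwa [e] at this

lemma upM : ∀ l : List G, (∀ t ∈ l, S.Smp t) → S.InM (l.prod⁻¹ * S.Δ ^ l.length) := by
  intro l
  induction l with
  | nil => simpa using InM_one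
  | cons s l' ih =>
    intro hl
    have hs : S.Smp s := hl s (by simp)
    have hl' : ∀ a ∈ l', S.Smp a := fun a ha => hl a (List.mem_cons_of_mem _ ha)
    simp only [List.prod_cons, List.length_cons]
    have e : (s * l'.prod)⁻¹ * S.Δ ^ (l'.length + 1)
        = (l'.prod⁻¹ * S.Δ ^ l'.length) * ((S.Δ ^ l'.length)⁻¹ * (s⁻¹ * S.Δ) * S.Δ ^ l'.length) := by
      rw [pow_succ]; group
    rw [e]
    exact InM_mul (ih hl') (InM_smp (taun_smp l'.length (smp_comp_delta hs)))

lemma fracM (g : G) : ∃ u v : G, S.InM u ∧ S.InM v ∧ g = u * v⁻¹ := by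
  have hg : g ∈ Subgroup.closure {a : G | a ∈ S.P ∧ a⁻¹ * S.Δ ∈ S.P} := by
    rw [S.simples_generate]; trivial
  refine Subgroup.closure_induction ?_ ?_ ?_ ?_ hg
  · intro x hx
    exact ⟨x, 1, InM_smp hx, InM_one, by group⟩
  · exact ⟨1, 1, InM_one, InM_one, by group⟩
  · rintro x y _ _ ⟨u, v, hu, hv, rfl⟩ ⟨w, z, hw, hz, rfl⟩
    refine ⟨u * (v⁻¹ * S.vee v w), z * (w⁻¹ * S.vee w v),
      InM_mul hu (joinM' hv hw), InM_mul hz (joinM' hw hv), ?_⟩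
    rw [vee_comm w v]; group
  · rintro x _ ⟨u, v, hu, hv, rfl⟩
    exact ⟨v, u, hv, hu, by group⟩

lemma conjM {x : G} (hx : S.InM x) : S.InM (S.Δ * x * S.Δ⁻¹) := by
  obtain ⟨l, hl, rfl⟩ := hx
  induction l with
  | nil => simpa using InM_one
  | cons s l' ih =>
    have hs : S.Smp s := hl s (by simp)
    have hl' : ∀ a ∈ l', S.Smp a := fun a ha => hl a (List.mem_cons_of_mem _ ha)
    simp only [List.prod_cons]
    have e : S.Δ * (s * l'.prod) * S.Δ⁻¹
        = (S.Δ * s * S.Δ⁻¹) * (S.Δ * l'.prod * S.Δ⁻¹) := by group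
    rw [e]
    exact InM_mul (InM_smp (tau_inv_smp hs)) (ih hl')

lemma conjMn : ∀ n : ℕ, ∀ {x : G}, S.InM x → S.InM (S.Δ ^ n * x * (S.Δ ^ n)⁻¹) := by
  intro n
  induction n with
  | zero => intro x hx; simpa using hx
  | succ n ih =>
    intro x hx
    have := conjM (ih hx)
    have e : S.Δ * (S.Δ ^ n * x * (S.Δ ^ n)⁻¹) * S.Δ⁻¹
        = S.Δ ^ (n + 1) * x * (S.Δ ^ (n + 1))⁻¹ := by rw [pow_succ]; group
    rwa [e] at this

lemma peel : ∀ n : ℕ, ∀ y : G, S.InM y → (S.Δ ^ n)⁻¹ * y ∈ S.P →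
    S.InM ((S.Δ ^ n)⁻¹ * y) := by
  intro n
  induction n with
  | zero => intro y hy _; simpa using hy
  | succ n ih =>
    intro y hy h
    have hΔy : S.Δ⁻¹ * y ∈ S.P := by
      have e : S.Δ⁻¹ * y = S.Δ ^ n * ((S.Δ ^ (n + 1))⁻¹ * y) := by rw [pow_succ]; group
      rw [e]; exact S.P.mul_mem (pow_mem S.delta_mem n) h
    have hy' : S.InM (S.Δ⁻¹ * y) := divM' hy smp_delta hΔy
    have h' : (S.Δ ^ n)⁻¹ * (S.Δ⁻¹ * y) ∈ S.P := by
      have e : (S.Δ ^ n)⁻¹ * (S.Δ⁻¹ * y) = (S.Δ ^ (n + 1))⁻¹ * y := by rw [pow_succ]; group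
      rw [e]; exact h
    have := ih _ hy' h'
    have e : (S.Δ ^ n)⁻¹ * (S.Δ⁻¹ * y) = (S.Δ ^ (n + 1))⁻¹ * y := by rw [pow_succ]; group
    rwa [e] at this

lemma pos_inM {x : G} (hx : x ∈ S.P) : S.InM x := by
  obtain ⟨u, v, hu, hv, rfl⟩ := fracM (S := S) x
  obtain ⟨l, hl, rfl⟩ := hv
  set n := l.length with hn
  have h1 : S.InM (u * (l.prod⁻¹ * S.Δ ^ n)) := InM_mul hu (upM l hl)
  have h2 : S.InM (S.Δ ^ n * (u * (l.prod⁻¹ * S.Δ ^ n)) * (S.Δ ^ n)⁻¹) := conjMn n h1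
  have e : (S.Δ ^ n)⁻¹ * (S.Δ ^ n * (u * (l.prod⁻¹ * S.Δ ^ n)) * (S.Δ ^ n)⁻¹)
      = u * l.prod⁻¹ := by group
  have := peel n _ h2 (by rw [e]; exact hx)
  rwa [e] at this

lemma conj_pos' {a : G} (ha : a ∈ S.P) : S.Δ * a * S.Δ⁻¹ ∈ S.P :=
  InM_pos (conjM (pos_inM ha))

lemma zconj (k : ℤ) {a : G} (ha : a ∈ S.P) : (S.Δ ^ k)⁻¹ * a * S.Δ ^ k ∈ S.P := by
  induction k using Int.induction_on with
  | zero => simpa using ha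
  | succ n ih =>
    have := S.conj_pos _ ih
    have e : S.Δ⁻¹ * ((S.Δ ^ (n : ℤ))⁻¹ * a * S.Δ ^ (n : ℤ)) * S.Δ
        = (S.Δ ^ ((n : ℤ) + 1))⁻¹ * a * S.Δ ^ ((n : ℤ) + 1) := by
      rw [zpow_add, zpow_one]; group
    rwa [e] at this
  | pred n ih =>
    have := conj_pos' ih
    have e : S.Δ * ((S.Δ ^ (-n : ℤ))⁻¹ * a * S.Δ ^ (-n : ℤ)) * S.Δ⁻¹
        = (S.Δ ^ (-(n : ℤ) - 1))⁻¹ * a * S.Δ ^ (-(n : ℤ) - 1) := by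
      rw [sub_eq_add_neg, zpow_add]; group
    rwa [e] at this


lemma zconj' (k : ℤ) {a : G} (ha : a ∈ S.P) : S.Δ ^ k * a * (S.Δ ^ k)⁻¹ ∈ S.P := by
  have := zconj (-k) ha
  have e : (S.Δ ^ (-k))⁻¹ * a * S.Δ ^ (-k) = S.Δ ^ k * a * (S.Δ ^ k)⁻¹ := by
    rw [zpow_neg]; group
  rwa [e] at this

lemma inf_le' (x : G) : x * S.Δ ^ (-S.inf x) ∈ S.P := by
  have := zconj' (S.inf x) (S.inf_le x)
  have e : S.Δ ^ S.inf x * ((S.Δ ^ S.inf x)⁻¹ * x) * (S.Δ ^ S.inf x)⁻¹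
      = x * S.Δ ^ (-S.inf x) := by rw [zpow_neg]; group
  rwa [e] at this

lemma inf_inv (x : G) : S.inf x⁻¹ = -S.sup x := by
  have h1 : -S.sup x ≤ S.inf x⁻¹ := by
    refine S.inf_max x⁻¹ _ ?_
    have := zconj' (S.sup x) (S.le_sup x)
    have e : S.Δ ^ S.sup x * (x⁻¹ * S.Δ ^ S.sup x) * (S.Δ ^ S.sup x)⁻¹
        = (S.Δ ^ (-S.sup x))⁻¹ * x⁻¹ := by rw [zpow_neg]; group
    rwa [e] at this
  have h2 : S.sup x ≤ -S.inf x⁻¹ := by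
    refine S.sup_min x _ ?_
    have := zconj' (S.inf x⁻¹) (S.inf_le x⁻¹)
    have e : S.Δ ^ S.inf x⁻¹ * ((S.Δ ^ S.inf x⁻¹)⁻¹ * x⁻¹) * (S.Δ ^ S.inf x⁻¹)⁻¹
        = x⁻¹ * S.Δ ^ (-S.inf x⁻¹) := by rw [zpow_neg]; group
    rwa [e] at this
  omega

lemma iota_pos (x : G) : S.iota x ∈ S.P := by
  have h := S.le_wedge (x * S.Δ ^ (-S.inf x)) S.Δ 1
    (by simpa using inf_le' x) (by simpa using S.delta_mem)
  simpa [iota] using h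

lemma pp_mem (x : G) : S.pp x ∈ S.P := by
  have h := S.le_wedge (S.iota x) (S.iota x⁻¹) 1
    (by simpa using iota_pos x) (by simpa using iota_pos x⁻¹)
  simpa [pp] using h

lemma pp_le_iota (x : G) : (S.pp x)⁻¹ * S.iota x ∈ S.P := S.wedge_le_left _ _

lemma pp_le_iota_inv (x : G) : (S.pp x)⁻¹ * S.iota x⁻¹ ∈ S.P := S.wedge_le_right _ _

lemma pp_le_xdelta (x : G) : (S.pp x)⁻¹ * (x * S.Δ ^ (-S.inf x)) ∈ S.P := by
  have h1 := pp_le_iota (S := S) x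
  have h2 : (S.iota x)⁻¹ * (x * S.Δ ^ (-S.inf x)) ∈ S.P := S.wedge_le_left _ _
  have e : (S.pp x)⁻¹ * (x * S.Δ ^ (-S.inf x))
      = ((S.pp x)⁻¹ * S.iota x) * ((S.iota x)⁻¹ * (x * S.Δ ^ (-S.inf x))) := by group
  rw [e]; exact S.P.mul_mem h1 h2

theorem main_inf (x : G) : S.inf x ≤ S.inf (S.sl x) := by
  set k := S.inf x with hk
  set p := S.pp x with hp
  refine S.inf_max _ k ?_
  have h1 : p⁻¹ * (x * S.Δ ^ (-k)) ∈ S.P := pp_le_xdelta x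
  have h2 := zconj k h1
  have h3 := S.P.mul_mem h2 (pp_mem x)
  have e : (S.Δ ^ k)⁻¹ * (p⁻¹ * (x * S.Δ ^ (-k))) * S.Δ ^ k * p
      = (S.Δ ^ k)⁻¹ * S.sl x := by
    rw [sl, ← hp, zpow_neg]; group
  rwa [e] at h3

theorem main_sup (x : G) : S.sup (S.sl x) ≤ S.sup x := by
  set q := S.sup x with hq
  set p := S.pp x with hp
  refine S.sup_min _ q ?_
  have h1 : (S.iota x⁻¹)⁻¹ * (x⁻¹ * S.Δ ^ (-S.inf x⁻¹)) ∈ S.P := S.wedge_le_left _ _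
  rw [inf_inv, neg_neg, ← hq] at h1
  have h2 : p⁻¹ * (x⁻¹ * S.Δ ^ q) ∈ S.P := by
    have e : p⁻¹ * (x⁻¹ * S.Δ ^ q)
        = ((S.pp x)⁻¹ * S.iota x⁻¹) * ((S.iota x⁻¹)⁻¹ * (x⁻¹ * S.Δ ^ q)) := by
      rw [hp]; group
    rw [e]; exact S.P.mul_mem (pp_le_iota_inv x) h1
  have h3 := S.P.mul_mem h2 (zconj q (pp_mem x))
  have e : p⁻¹ * (x⁻¹ * S.Δ ^ q) * ((S.Δ ^ q)⁻¹ * S.pp x * S.Δ ^ q)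
      = (S.sl x)⁻¹ * S.Δ ^ q := by rw [sl, ← hp]; group
  rwa [e] at h3

end Garside

open Garside in
theorem statement0 {G : Type*} [Group G] (S : Garside G) (x : G) :
    S.inf x ≤ S.inf (S.sl x) ∧ S.sup (S.sl x) ≤ S.sup x ∧
      S.len (S.sl x) ≤ S.len x := by
  have h1 := Garside.main_inf (S := S) x
  have h2 := Garside.main_sup (S := S) x
  refine ⟨h1, h2, ?_⟩
  simp only [Garside.len]
  omega

end GarsidePaper
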